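/- Let σ be a page request sequence processed by the LRU policy with cache size k ≥ 1 starting from an empty cache. If LRU faults at two times s < t on requests for the same page (σ_s = σ_t), then the requests σ_s, σ_{s+1}, …, σ_t are for at least k+1 distinct pages. -/

import Mathlib

/-- One step of the LRU policy with cache size `k`.  The cache is maintained as a list
of (distinct) pages ordered by recency of their most recent request (most recent first);
on a request for `p`, page `p` is moved to the front, and if the cache overflows, the
page whose most recent request lies furthest in the past (the last list entry) is evicted. -/
def lruStep (k : ℕ) (L : List ℕ) (p : ℕ) : List ℕ := (p :: L.erase p).take k

/-- The LRU cache (with cache size `k`, starting from an empty cache) just before the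
request at (0-based) time `t` of the request sequence `σ`. -/
def lruCache (k : ℕ) (σ : ℕ → ℕ) : ℕ → List ℕ
  | 0 => []
  | t + 1 => lruStep k (lruCache k σ t) (σ t)

/-- If LRU (cache size `k ≥ 1`, empty initial cache) faults at two times `s < t` on
requests for the same page, then the requests `σ s, σ (s+1), …, σ t` are for at least
`k + 1` distinct pages.  (Times are 0-based: the request at time `u` is `σ u`, and it is
a fault when `σ u ∉ lruCache k σ u`.) -/
lemma lruCache_succ (k : ℕ) (σ : ℕ → ℕ) (t : ℕ) :
    lruCache k σ (t + 1) = lruStep k (lruCache k σ t) (σ t) := rfl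

lemma nodup_lruCache (k : ℕ) (σ : ℕ → ℕ) : ∀ t, (lruCache k σ t).Nodup
  | 0 => List.nodup_nil
  | t + 1 => by
    have h := nodup_lruCache k σ t
    rw [lruCache_succ, lruStep]
    exact ((h.erase _).cons h.not_mem_erase).sublist (List.take_sublist _ _)

lemma takeWhile_take_subset (pred : ℕ → Bool) :
    ∀ (n : ℕ) (l : List ℕ), ∀ q ∈ (l.take n).takeWhile pred, q ∈ l.takeWhile pred := by
  intro n l
  induction l generalizing n with
  | nil => simp
  | cons a l ih =>
    cases n with
    | zero => simp
    | succ m =>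
      intro q hq
      rw [List.take_succ_cons, List.takeWhile_cons] at hq
      rw [List.takeWhile_cons]
      cases h : pred a with
      | false => simp [h] at hq
      | true =>
        simp only [h] at hq ⊢
        rcases List.mem_cons.mp hq with rfl | hq
        · exact List.mem_cons_self
        · exact List.mem_cons_of_mem _ (ih m q hq)

lemma mem_takeWhile_erase (p a : ℕ) (hap : a ≠ p) :
    ∀ (C : List ℕ), ∀ q ∈ (C.erase a).takeWhile (· != p), q ∈ C.takeWhile (· != p) := by
  intro C
  induction C with
  | nil => simp
  | cons b C ih =>
    intro q hq
    by_cases hba : b = a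
    · subst hba
      rw [List.erase_cons_head] at hq
      rw [List.takeWhile_cons]
      simp only [show (b != p) = true by simp [hap]]
      exact List.mem_cons_of_mem _ hq
    · rw [List.erase_cons_tail (by simp [hba])] at hq
      rw [List.takeWhile_cons] at hq ⊢
      cases h : (b != p) with
      | false => simp [h] at hq
      | true =>
        simp only [h] at hq ⊢
        rcases List.mem_cons.mp hq with rfl | hq
        · exact List.mem_cons_self
        · exact List.mem_cons_of_mem _ (ih q hq)

theorem stmt4 (k : ℕ) (hk : 1 ≤ k) (σ : ℕ → ℕ) (s t : ℕ) (hst : s < t)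
    (hpage : σ s = σ t)
    (hfs : σ s ∉ lruCache k σ s) (hft : σ t ∉ lruCache k σ t) :
    k + 1 ≤ ((Finset.Icc s t).image σ).card := by
  have key : ∀ v, s + 1 ≤ v →
      ((σ s ∈ lruCache k σ v ∧
          ∀ q ∈ (lruCache k σ v).takeWhile (· != σ s), q ∈ (Finset.Ico s v).image σ)
        ∨ k + 1 ≤ ((Finset.Ico s v).image σ).card) := by
    intro v hv
    induction v, hv using Nat.le_induction with
    | base =>
      left
      obtain ⟨m, rfl⟩ : ∃ m, k = m + 1 := ⟨k - 1, by omega⟩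
      rw [lruCache_succ, lruStep]
      constructor
      · rw [List.take_succ_cons]
        exact List.mem_cons_self
      · intro q hq
        rw [List.take_succ_cons, List.takeWhile_cons] at hq
        simp at hq
    | succ v hv ih =>
      have himg : (Finset.Ico s v).image σ ⊆ (Finset.Ico s (v + 1)).image σ :=
        Finset.image_subset_image (Finset.Ico_subset_Ico le_rfl (by omega))
      rcases ih with ⟨hpC, hpre⟩ | hcard
      · set C := lruCache k σ v with hC
        by_cases hap : σ v = σ s
        · left
          obtain ⟨m, rfl⟩ : ∃ m, k = m + 1 := ⟨k - 1, by omega⟩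
          rw [lruCache_succ, lruStep, hap]
          constructor
          · rw [List.take_succ_cons]; exact List.mem_cons_self
          · intro q hq
            rw [List.take_succ_cons, List.takeWhile_cons] at hq
            simp at hq
        · -- σ v ≠ σ s
          set l := σ v :: C.erase (σ v) with hl
          have hCnd : C.Nodup := nodup_lruCache k σ v
          have hlnd : l.Nodup := hCnd.erase _ |>.cons hCnd.not_mem_erase
          have hpl : σ s ∈ l :=
            List.mem_cons_of_mem _ ((List.mem_erase_of_ne (Ne.symm hap)).mpr hpC)
          have hcache : lruCache k σ (v + 1) = l.take k := by
            rw [lruCache_succ, lruStep]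
          have hmem : ∀ q ∈ l.takeWhile (· != σ s), q ∈ (Finset.Ico s (v + 1)).image σ := by
            intro q hq
            rw [hl, List.takeWhile_cons] at hq
            simp only [show (σ v != σ s) = true by simp [hap]] at hq
            rcases List.mem_cons.mp hq with rfl | hq
            · exact Finset.mem_image.mpr ⟨v, Finset.mem_Ico.mpr ⟨by omega, by omega⟩, rfl⟩
            · exact himg (hpre q (mem_takeWhile_erase _ _ hap C q hq))
          by_cases hpC' : σ s ∈ l.take k
          · left
            rw [hcache]
            refine ⟨hpC', fun q hq => hmem q (takeWhile_take_subset _ k l q hq)⟩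
          · right
            have hklt : k < l.length := by
              by_contra h
              push_neg at h
              rw [List.take_of_length_le h] at hpC'
              exact hpC' hpl
            have hlen : (l.take k).length = k := by
              rw [List.length_take]; omega
            have hnd : (l.take k).Nodup := hlnd.sublist (List.take_sublist _ _)
            have hall : (l.take k).takeWhile (· != σ s) = l.take k :=
              List.takeWhile_eq_self_iff.mpr (fun x hx => by
                simp only [bne_iff_ne, ne_eq, decide_eq_true_eq]
                intro h; exact hpC' (h ▸ hx))
            have hsub : insert (σ s) (l.take k).toFinset ⊆ (Finset.Ico s (v + 1)).image σ := by
              intro q hq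
              rcases Finset.mem_insert.mp hq with rfl | hq
              · exact Finset.mem_image.mpr ⟨s, Finset.mem_Ico.mpr ⟨le_rfl, by omega⟩, rfl⟩
              · have hq' : q ∈ l.take k := List.mem_toFinset.mp hq
                rw [← hall] at hq'
                exact hmem q (takeWhile_take_subset _ k l q hq')
            calc k + 1 = (insert (σ s) (l.take k).toFinset).card := by
                  rw [Finset.card_insert_of_notMem (fun h => hpC' (List.mem_toFinset.mp h)),
                    List.toFinset_card_of_nodup hnd, hlen]
              _ ≤ _ := Finset.card_le_card hsub
      · exact Or.inr (le_trans hcard (Finset.card_le_card himg))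
  rcases key t (by omega) with ⟨hmem, _⟩ | hcard
  · exact absurd (hpage ▸ hmem) hft
  · exact le_trans hcard (Finset.card_le_card
      (Finset.image_subset_image (Finset.Ico_subset_Icc_self)))
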